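/- Let π ∈ S_n(132, 1̲2̲3̲) and let d be the Motzkin path Γ(π). Then the number of occurrences of the consecutive pattern 231 in π (indices i with π_{i+2} < π_i < π_{i+1}) equals the number of up steps of d that are not in the first position, i.e. #{ i > 1 : d_i = U }. -/

import Mathlib

open scoped Classical

noncomputable section

/-- Steps of a Motzkin path: up, down, horizontal. -/
inductive Step : Type
  | U : Step
  | D : Step
  | H : Step
  deriving DecidableEq

/-- Steps of a bicolored Motzkin path: up, down, horizontal of color `c₁`,
horizontal of color `c₂`. -/
inductive CStep : Type
  | U : CStep
  | D : CStep
  | H : CStep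
  | Ht : CStep
  deriving DecidableEq

/-- A word over `{U,D,H}` is a Motzkin word if the numbers of `U`'s and `D`'s agree
and every prefix has at least as many `U`'s as `D`'s. -/
def IsMotzkin (w : List Step) : Prop :=
  w.count Step.U = w.count Step.D ∧
  ∀ k, (w.take k).count Step.D ≤ (w.take k).count Step.U

/-- The `y`-coordinate of the lattice point reached after the first `i` steps. -/
def levelAt (w : List Step) (i : ℕ) : ℕ :=
  (w.take i).count Step.U - (w.take i).count Step.D

/-- The height of the `i`-th step (0-indexed): the `y`-coordinate of its ending
point for a down step, of its starting point otherwise. -/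
def heightAt (w : List Step) (i : ℕ) : ℕ :=
  if w.getD i Step.H = Step.D then levelAt w (i + 1) else levelAt w i

/-- Twice the area between the path and the `x`-axis (trapezoid rule). -/
def twoArea (w : List Step) : ℕ :=
  ∑ i ∈ Finset.range w.length, (levelAt w i + levelAt w (i + 1))

/-- The number of occurrences of `p` as a factor (subword of consecutive letters) of `w`. -/
def occFactor (p w : List Step) : ℕ :=
  ((Finset.range w.length).filter fun i => p <+: w.drop i).card

/-- The `y`-coordinate reached after `i` steps, bicolored version. -/
def cLevelAt (w : List CStep) (i : ℕ) : ℕ :=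
  (w.take i).count CStep.U - (w.take i).count CStep.D

/-- The height of the `i`-th step, bicolored version. -/
def cHeightAt (w : List CStep) (i : ℕ) : ℕ :=
  if w.getD i CStep.H = CStep.D then cLevelAt w (i + 1) else cLevelAt w i

/-- A bicolored Motzkin word: a Motzkin word whose horizontal steps have two possible
colors (`H` and `Ht`), horizontal steps at height `0` not being allowed to have the
second color. -/
def IsBicoloredMotzkin (w : List CStep) : Prop :=
  w.count CStep.U = w.count CStep.D ∧
  (∀ k, (w.take k).count CStep.D ≤ (w.take k).count CStep.U) ∧
  (∀ i < w.length, w.getD i CStep.H = CStep.Ht → cHeightAt w i ≠ 0)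

/-- A histoire de Laguerre of length `n`: a bicolored Motzkin path of length `n`
together with a sequence `l` of nonnegative integers such that `l i ≤ h i` for each
step, the inequality being strict for the horizontal steps of the second color
(the "suitable constraints" of De Medicis and Viennot). -/
def IsLaguerre (n : ℕ) (dl : List CStep × List ℕ) : Prop :=
  dl.1.length = n ∧ dl.2.length = n ∧ IsBicoloredMotzkin dl.1 ∧
  ∀ i < n, dl.2.getD i 0 ≤ cHeightAt dl.1 i ∧
    (dl.1.getD i CStep.H = CStep.Ht → dl.2.getD i 0 < cHeightAt dl.1 i)

/-- A labelled Motzkin path of length `n`: a Motzkin path whose down steps carry a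
label not exceeding their height, all other steps carrying the label `0` (unlabelled). -/
def IsLabelledMotzkin (n : ℕ) (dl : List Step × List ℕ) : Prop :=
  dl.1.length = n ∧ dl.2.length = n ∧ IsMotzkin dl.1 ∧
  ∀ i < n, (dl.1.getD i Step.H = Step.D → dl.2.getD i 0 ≤ heightAt dl.1 i) ∧
    (dl.1.getD i Step.H ≠ Step.D → dl.2.getD i 0 = 0)

/-- The embedding of plain Motzkin steps into bicolored steps. -/
def Step.toC : Step → CStep
  | Step.U => CStep.U
  | Step.D => CStep.D
  | Step.H => CStep.H

/-- The value (as a natural number, 0-indexed) of the permutation `π` at the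
(0-indexed) position `i`; junk value `0` out of range. -/
def pv {n : ℕ} (π : Equiv.Perm (Fin n)) (i : ℕ) : ℕ :=
  if h : i < n then (π ⟨i, h⟩ : Fin n).val else 0

/-- Position `p` starts an ascending run of `π` (in one-line notation):
either `p = 0` or there is a descent just before `p`. -/
def RunStartAt {n : ℕ} (π : Equiv.Perm (Fin n)) (p : Fin n) : Prop :=
  ∀ q : Fin n, (q : ℕ) + 1 = (p : ℕ) → π p < π q

/-- Position `p` ends an ascending run of `π`. -/
def RunEndAt {n : ℕ} (π : Equiv.Perm (Fin n)) (p : Fin n) : Prop :=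
  ∀ q : Fin n, (p : ℕ) + 1 = (q : ℕ) → π q < π p

/-- The step of the bicolored Motzkin path `Γ(π)` associated with the value `v`:
`U` if `v` is a head, `D` if it is a tail, `H` if it is a head-tail, `Ht` if it
is a boarder. -/
def gammaStep {n : ℕ} (π : Equiv.Perm (Fin n)) (v : Fin n) : CStep :=
  if RunStartAt π (π.symm v) then
    if RunEndAt π (π.symm v) then CStep.H else CStep.U
  else
    if RunEndAt π (π.symm v) then CStep.D else CStep.Ht

/-- The label of `Γ(π)` at the value `v`: the number of ascending runs of `π`
(determined by the position `pq.1` of their first element and the position `pq.2`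
of their last element) whose first value is `< v`, whose last value is `> v`, and
whose last element precedes `v` in `π`. -/
def gammaLabel {n : ℕ} (π : Equiv.Perm (Fin n)) (v : Fin n) : ℕ :=
  (Finset.univ.filter fun pq : Fin n × Fin n =>
    RunStartAt π pq.1 ∧ RunEndAt π pq.2 ∧ pq.1 ≤ pq.2 ∧
    (∀ r : Fin n, pq.1 ≤ r → r < pq.2 → ¬ RunEndAt π r) ∧
    π pq.1 < v ∧ v < π pq.2 ∧ pq.2 < π.symm v).card

/-- The map `Γ` from permutations to pairs (bicolored Motzkin path, label sequence). -/
def Gamma {n : ℕ} (π : Equiv.Perm (Fin n)) : List CStep × List ℕ :=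
  (List.ofFn fun v => gammaStep π v, List.ofFn fun v => gammaLabel π v)

/-- The (uncolored) Motzkin path `Γ(π)` for permutations with no boarders:
`U` for heads, `D` for tails, `H` for head-tails. -/
def gammaPath {n : ℕ} (π : Equiv.Perm (Fin n)) : List Step :=
  List.ofFn fun v : Fin n =>
    if RunStartAt π (π.symm v) then
      if RunEndAt π (π.symm v) then Step.H else Step.U
    else
      if RunEndAt π (π.symm v) then Step.D else Step.H

/-- `π` is an involution. -/
def IsInvolution {n : ℕ} (π : Equiv.Perm (Fin n)) : Prop :=
  ∀ x, π (π x) = x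

/-- The Motzkin path `Ψ(π)` of an involution `π`: `H` at fixed points, `U` at the
smaller element of a 2-cycle, `D` at the larger element of a 2-cycle. -/
def psiWord {n : ℕ} (π : Equiv.Perm (Fin n)) : List Step :=
  List.ofFn fun v : Fin n =>
    if π v = v then Step.H else if v < π v then Step.U else Step.D

/-- The label of `Ψ(π)` at `v`: if `v` is the larger element of a 2-cycle
`(π v, v)`, the number of 2-cycles `(x, π x)` with `π v < x < v < π x`; `0` otherwise. -/
def psiLabel {n : ℕ} (π : Equiv.Perm (Fin n)) (v : Fin n) : ℕ :=
  if π v < v then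
    (Finset.univ.filter fun x : Fin n => π v < x ∧ x < v ∧ v < π x).card
  else 0

/-- The map `Ψ` from involutions to labelled Motzkin paths. -/
def Psi {n : ℕ} (π : Equiv.Perm (Fin n)) : List Step × List ℕ :=
  (psiWord π, List.ofFn fun v => psiLabel π v)

/-- Number of inversions of `π`. -/
def invCount {n : ℕ} (π : Equiv.Perm (Fin n)) : ℕ :=
  (Finset.univ.filter fun p : Fin n × Fin n => p.1 < p.2 ∧ π p.2 < π p.1).card

/-- Number of coinversions of `π`. -/
def coinvCount {n : ℕ} (π : Equiv.Perm (Fin n)) : ℕ :=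
  (Finset.univ.filter fun p : Fin n × Fin n => p.1 < p.2 ∧ π p.1 < π p.2).card

/-- Number of descents of `π`. -/
def desCount {n : ℕ} (π : Equiv.Perm (Fin n)) : ℕ :=
  ((Finset.range (n - 1)).filter fun i => pv π (i + 1) < pv π i).card

/-- Number of ascents of `π`. -/
def ascCount {n : ℕ} (π : Equiv.Perm (Fin n)) : ℕ :=
  ((Finset.range (n - 1)).filter fun i => pv π i < pv π (i + 1)).card

/-- Number of fixed points of `π`. -/
def fixCount {n : ℕ} (π : Equiv.Perm (Fin n)) : ℕ :=
  (Finset.univ.filter fun i : Fin n => π i = i).card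

/-- Number of occurrences of the consecutive pattern 123 in `π`. -/
def occC123 {n : ℕ} (π : Equiv.Perm (Fin n)) : ℕ :=
  ((Finset.range (n - 2)).filter fun i =>
    pv π i < pv π (i + 1) ∧ pv π (i + 1) < pv π (i + 2)).card

/-- Number of occurrences of the consecutive pattern 132 in `π`. -/
def occC132 {n : ℕ} (π : Equiv.Perm (Fin n)) : ℕ :=
  ((Finset.range (n - 2)).filter fun i =>
    pv π i < pv π (i + 2) ∧ pv π (i + 2) < pv π (i + 1)).card

/-- Number of occurrences of the consecutive pattern 213 in `π`. -/
def occC213 {n : ℕ} (π : Equiv.Perm (Fin n)) : ℕ :=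
  ((Finset.range (n - 2)).filter fun i =>
    pv π (i + 1) < pv π i ∧ pv π i < pv π (i + 2)).card

/-- Number of occurrences of the consecutive pattern 231 in `π`. -/
def occC231 {n : ℕ} (π : Equiv.Perm (Fin n)) : ℕ :=
  ((Finset.range (n - 2)).filter fun i =>
    pv π (i + 2) < pv π i ∧ pv π i < pv π (i + 1)).card

/-- Number of occurrences of the consecutive pattern 312 in `π`. -/
def occC312 {n : ℕ} (π : Equiv.Perm (Fin n)) : ℕ :=
  ((Finset.range (n - 2)).filter fun i =>
    pv π (i + 1) < pv π (i + 2) ∧ pv π (i + 2) < pv π i).card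

/-- Number of occurrences of the consecutive pattern 321 in `π`. -/
def occC321 {n : ℕ} (π : Equiv.Perm (Fin n)) : ℕ :=
  ((Finset.range (n - 2)).filter fun i =>
    pv π (i + 2) < pv π (i + 1) ∧ pv π (i + 1) < pv π i).card

/-- `π` contains the classical pattern 132. -/
def Contains132 {n : ℕ} (π : Equiv.Perm (Fin n)) : Prop :=
  ∃ i j k : Fin n, i < j ∧ j < k ∧ π i < π k ∧ π k < π j

/-- `π` contains the consecutive pattern 123. -/
def ContainsC123 {n : ℕ} (π : Equiv.Perm (Fin n)) : Prop :=
  ∃ i j k : Fin n, (i : ℕ) + 1 = (j : ℕ) ∧ (j : ℕ) + 1 = (k : ℕ) ∧ π i < π j ∧ π j < π k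

/-- `π` contains the classical pattern 3412. -/
def Contains3412 {n : ℕ} (π : Equiv.Perm (Fin n)) : Prop :=
  ∃ i₁ i₂ i₃ i₄ : Fin n, i₁ < i₂ ∧ i₂ < i₃ ∧ i₃ < i₄ ∧
    π i₃ < π i₄ ∧ π i₄ < π i₁ ∧ π i₁ < π i₂

/-- `π` contains the vincular pattern 1-2̲3̲. -/
def Contains1_23 {n : ℕ} (π : Equiv.Perm (Fin n)) : Prop :=
  ∃ i j k : Fin n, i < j ∧ (j : ℕ) + 1 = (k : ℕ) ∧ π i < π j ∧ π j < π k

/-- `π` contains the vincular pattern 1-3̲2̲. -/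
def Contains1_32 {n : ℕ} (π : Equiv.Perm (Fin n)) : Prop :=
  ∃ i j k : Fin n, i < j ∧ (j : ℕ) + 1 = (k : ℕ) ∧ π i < π k ∧ π k < π j

/-- `w` is the one-line notation of a permutation of `{0, …, n-1}`. -/
def IsPermWord (n : ℕ) (w : List ℕ) : Prop :=
  List.Perm w (List.range n)

/-- Position `p` starts an ascending run of the word `w`. -/
def wRunStart (w : List ℕ) (p : ℕ) : Prop :=
  p = 0 ∨ w.getD p 0 < w.getD (p - 1) 0

/-- Position `p` ends an ascending run of the word `w`. -/
def wRunEnd (w : List ℕ) (p : ℕ) : Prop :=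
  p + 1 = w.length ∨ w.getD (p + 1) 0 < w.getD p 0

/-- The step of `Γ(w)` associated with the value `v`. -/
def wGammaStep (w : List ℕ) (v : ℕ) : CStep :=
  if wRunStart w (w.idxOf v) then
    if wRunEnd w (w.idxOf v) then CStep.H else CStep.U
  else
    if wRunEnd w (w.idxOf v) then CStep.D else CStep.Ht

/-- The label of `Γ(w)` at the value `v`. -/
def wGammaLabel (w : List ℕ) (v : ℕ) : ℕ :=
  ((Finset.range w.length ×ˢ Finset.range w.length).filter fun pq =>
    wRunStart w pq.1 ∧ wRunEnd w pq.2 ∧ pq.1 ≤ pq.2 ∧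
    (∀ r, pq.1 ≤ r → r < pq.2 → ¬ wRunEnd w r) ∧
    w.getD pq.1 0 < v ∧ v < w.getD pq.2 0 ∧ pq.2 < w.idxOf v).card

/-- The map `Γ` on one-line words. -/
def wGamma (w : List ℕ) : List CStep × List ℕ :=
  ((List.range w.length).map (wGammaStep w), (List.range w.length).map (wGammaLabel w))

/-- The word `w` contains the vincular pattern 1-2̲3̲. -/
def wContains1_23 (w : List ℕ) : Prop :=
  ∃ i j, i < j ∧ j + 1 < w.length ∧
    w.getD i 0 < w.getD j 0 ∧ w.getD j 0 < w.getD (j + 1) 0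

/-- The word `w` contains the vincular pattern 1-3̲2̲. -/
def wContains1_32 (w : List ℕ) : Prop :=
  ∃ i j, i < j ∧ j + 1 < w.length ∧
    w.getD i 0 < w.getD (j + 1) 0 ∧ w.getD (j + 1) 0 < w.getD j 0

/-- The word `w` contains the classical pattern 132. -/
def wContains132 (w : List ℕ) : Prop :=
  ∃ i j k, i < j ∧ j < k ∧ k < w.length ∧
    w.getD i 0 < w.getD k 0 ∧ w.getD k 0 < w.getD j 0

/-- The word `w` contains the consecutive pattern 123. -/
def wContainsC123 (w : List ℕ) : Prop :=
  ∃ i, i + 2 < w.length ∧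
    w.getD i 0 < w.getD (i + 1) 0 ∧ w.getD (i + 1) 0 < w.getD (i + 2) 0

/-- The one-line word of the Foata image `F(π)` of an involution `π`: write `π` in
standard cycle notation (each cycle with its least element first, cycles in
decreasing order of their least elements) and erase the parentheses. -/
def foataWord {n : ℕ} (π : Equiv.Perm (Fin n)) : List ℕ :=
  (((List.range n).reverse).map fun m =>
    if pv π m = m then [m]
    else if m < pv π m then [m, pv π m]
    else ([] : List ℕ)).flatten

/-- The number of long tunnels of `d`: occurrences of factors `U α D` with `α` a
nonempty Motzkin word. -/
def longTunnelCount (d : List Step) : ℕ :=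
  ((Finset.range d.length ×ˢ Finset.range d.length).filter fun ij =>
    ij.1 + 1 < ij.2 ∧ d.getD ij.1 Step.H = Step.U ∧ d.getD ij.2 Step.H = Step.D ∧
    IsMotzkin ((d.drop (ij.1 + 1)).take (ij.2 - ij.1 - 1))).card

/-- The number of weak valleys of `d`: occurrences of the factors `HH, HU, DH, DU`. -/
def weakValleyCount (d : List Step) : ℕ :=
  occFactor [Step.H, Step.H] d + occFactor [Step.H, Step.U] d +
  occFactor [Step.D, Step.H] d + occFactor [Step.D, Step.U] d

end

section Aux

variable {n : ℕ} (π : Equiv.Perm (Fin n))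

lemma aux_no123 (h₂ : ¬ ContainsC123 π) {p : ℕ} (hp : p + 2 < n) :
    ¬ (π ⟨p, by omega⟩ < π ⟨p+1, by omega⟩ ∧ π ⟨p+1, by omega⟩ < π ⟨p+2, hp⟩) := by
  rintro ⟨h1, h2⟩
  exact h₂ ⟨⟨p, by omega⟩, ⟨p+1, by omega⟩, ⟨p+2, hp⟩, rfl, rfl, h1, h2⟩

/-- If `π` avoids 132 and consecutive 123, an ascent at `p` with `p+2 < n`
forces `π(p+2) < π(p)`. -/
lemma aux_lemA (h₁ : ¬ Contains132 π) (h₂ : ¬ ContainsC123 π) {p : ℕ} (hp : p + 2 < n)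
    (ha : π ⟨p, by omega⟩ < π ⟨p+1, by omega⟩) : π ⟨p+2, hp⟩ < π ⟨p, by omega⟩ := by
  rcases lt_trichotomy (π ⟨p+2, hp⟩) (π ⟨p, by omega⟩) with h | h | h
  · exact h
  · have := π.injective h
    simp only [Fin.mk.injEq] at this
    omega
  · rcases lt_trichotomy (π ⟨p+2, hp⟩) (π ⟨p+1, by omega⟩) with h' | h' | h'
    · exact absurd ⟨⟨p, by omega⟩, ⟨p+1, by omega⟩, ⟨p+2, hp⟩,
        by simp [Fin.lt_def], by simp [Fin.lt_def], h, h'⟩ h₁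
    · have := π.injective h'
      simp only [Fin.mk.injEq] at this
      omega
    · exact (aux_no123 π h₂ hp ⟨ha, h'⟩).elim

/-- An ascent at `p` implies `p` is a run start (else consecutive 123). -/
lemma aux_lemB (h₂ : ¬ ContainsC123 π) {p : ℕ} (hp : p + 1 < n)
    (ha : π ⟨p, by omega⟩ < π ⟨p+1, hp⟩) : RunStartAt π ⟨p, by omega⟩ := by
  intro q hq
  simp only at hq
  rcases lt_trichotomy (π ⟨p, by omega⟩) (π q) with h | h | h
  · exact h
  · have := π.injective h
    have : (⟨p, by omega⟩ : Fin n).val = q.val := by rw [this]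
    simp only at this
    omega
  · exfalso
    have hq2 : (q : ℕ) + 2 < n := by omega
    apply aux_no123 π h₂ hq2
    constructor
    · have e1 : (⟨(q : ℕ), by omega⟩ : Fin n) = q := by ext; rfl
      have e2 : (⟨(q : ℕ) + 1, by omega⟩ : Fin n) = ⟨p, by omega⟩ := by ext; simp [hq]
      rw [e1, e2]; exact h
    · have e2 : (⟨(q : ℕ) + 1, by omega⟩ : Fin n) = ⟨p, by omega⟩ := by ext; simp [hq]
      have e3 : (⟨(q : ℕ) + 2, hq2⟩ : Fin n) = ⟨p + 1, hp⟩ := by ext; simp; omega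
      rw [e2, e3]; exact ha

/-- An ascent at `p` implies `p` is not a run end. -/
lemma aux_lemC {p : ℕ} (hp : p + 1 < n)
    (ha : π ⟨p, by omega⟩ < π ⟨p+1, hp⟩) : ¬ RunEndAt π ⟨p, by omega⟩ := by
  intro h
  exact absurd ha (not_lt.2 (le_of_lt (h ⟨p+1, hp⟩ rfl)))

/-- A head at position `n-2` (ascent at run start just before the end) has value 0. -/
lemma aux_lemD (h₁ : ¬ Contains132 π) {p : ℕ} (hp : p + 1 < n) (hpn : p + 2 = n)
    (hstart : RunStartAt π ⟨p, by omega⟩) (ha : π ⟨p, by omega⟩ < π ⟨p+1, hp⟩) :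
    (π ⟨p, by omega⟩ : ℕ) = 0 := by
  by_contra h0
  have hn : 0 < n := by omega
  set q : Fin n := π.symm ⟨0, hn⟩ with hqdef
  have hπq : π q = ⟨0, hn⟩ := π.apply_symm_apply _
  have hqp : q.val ≠ p := by
    intro h
    have : q = ⟨p, by omega⟩ := by ext; exact h
    rw [this] at hπq
    rw [hπq] at h0
    exact h0 rfl
  have hπppos : 0 < (π ⟨p, by omega⟩ : ℕ) := Nat.pos_of_ne_zero h0
  have hqp1 : q.val ≠ p + 1 := by
    intro h
    have : q = ⟨p+1, hp⟩ := by ext; exact h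
    rw [this] at hπq
    have : (π ⟨p+1, hp⟩ : ℕ) = 0 := by rw [hπq]
    have := Fin.lt_def.1 ha
    omega
  have hqlt : q.val < p := by
    have := q.isLt
    omega
  have hp1 : 1 ≤ p := by omega
  have hprev : π ⟨p, by omega⟩ < π ⟨p - 1, by omega⟩ := hstart ⟨p - 1, by omega⟩ (by simp; omega)
  have hqp2 : q.val ≠ p - 1 := by
    intro h
    have : q = ⟨p - 1, by omega⟩ := by ext; exact h
    rw [← this] at hprev
    rw [hπq] at hprev
    have := Fin.lt_def.1 hprev
    simp at this
  apply h₁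
    ⟨q, ⟨p - 1, by omega⟩, ⟨p, by omega⟩, by simp [Fin.lt_def]; omega,
      by simp [Fin.lt_def]; omega, ?_, hprev⟩
  rw [hπq]
  exact Fin.lt_def.2 (by simpa using hπppos)

lemma aux_getD {v : ℕ} (hv : v < n) :
    (gammaPath π).getD v Step.H =
      if RunStartAt π (π.symm ⟨v, hv⟩) then
        if RunEndAt π (π.symm ⟨v, hv⟩) then Step.H else Step.U
      else if RunEndAt π (π.symm ⟨v, hv⟩) then Step.D else Step.H := by
  rw [gammaPath, List.getD_eq_getElem _ _ (by simpa using hv), List.getElem_ofFn]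

lemma aux_length : (gammaPath π).length = n := by simp [gammaPath]

end Aux

/-- For `π ∈ S_n(132, 1̲2̲3̲)` with Motzkin path `d = Γ(π)`:
the number of occurrences of the consecutive pattern 231 in `π` equals the number of
up steps of `d` that are not in the first position. -/
theorem occC231_eq_noninitial_up_steps (n : ℕ) (π : Equiv.Perm (Fin n))
    (h₁ : ¬ Contains132 π) (h₂ : ¬ ContainsC123 π) :
    occC231 π = ((Finset.Ico 1 (gammaPath π).length).filter
      (fun i => (gammaPath π).getD i Step.H = Step.U)).card := by
  rw [occC231]
  apply Finset.card_bij (fun a _ => pv π a)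
  · -- maps into the target
    rintro a ha
    rw [Finset.mem_filter, Finset.mem_range] at ha
    obtain ⟨han, hlo, hhi⟩ := ha
    have ha0 : a < n := by omega
    have ha1 : a + 1 < n := by omega
    have ha2 : a + 2 < n := by omega
    have e0 : pv π a = (π ⟨a, ha0⟩ : ℕ) := dif_pos ha0
    have e1 : pv π (a+1) = (π ⟨a+1, ha1⟩ : ℕ) := dif_pos ha1
    have e2 : pv π (a+2) = (π ⟨a+2, ha2⟩ : ℕ) := dif_pos ha2
    rw [e0, e1] at hhi
    rw [e0, e2] at hlo
    rw [e0]
    have hv : (π ⟨a, ha0⟩ : ℕ) < n := (π ⟨a, ha0⟩).isLt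
    rw [Finset.mem_filter, Finset.mem_Ico, aux_length]
    refine ⟨⟨by omega, hv⟩, ?_⟩
    rw [aux_getD π hv]
    have hsymm : π.symm ⟨(π ⟨a, ha0⟩ : ℕ), hv⟩ = ⟨a, ha0⟩ := by
      have : (⟨(π ⟨a, ha0⟩ : ℕ), hv⟩ : Fin n) = π ⟨a, ha0⟩ := by ext; rfl
      rw [this, Equiv.symm_apply_apply]
    rw [hsymm]
    have hasc : π ⟨a, ha0⟩ < π ⟨a+1, ha1⟩ := Fin.lt_def.2 hhi
    rw [if_pos (aux_lemB π h₂ ha1 hasc), if_neg (aux_lemC π ha1 hasc)]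
  · -- injective
    rintro a ha b hb hab
    rw [Finset.mem_filter, Finset.mem_range] at ha hb
    have ha0 : a < n := by omega
    have hb0 : b < n := by omega
    rw [pv, dif_pos ha0, pv, dif_pos hb0] at hab
    have : π ⟨a, ha0⟩ = π ⟨b, hb0⟩ := by ext; exact hab
    have := π.injective this
    simpa using this
  · -- surjective
    rintro v hv
    rw [Finset.mem_filter, Finset.mem_Ico, aux_length] at hv
    obtain ⟨⟨hv1, hvn⟩, hU⟩ := hv
    rw [aux_getD π hvn] at hU
    set p : Fin n := π.symm ⟨v, hvn⟩ with hpdef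
    have hπp : π p = ⟨v, hvn⟩ := π.apply_symm_apply _
    have hstart : RunStartAt π p := by
      by_contra h
      rw [if_neg h] at hU
      split at hU <;> simp at hU
    have hnend : ¬ RunEndAt π p := by
      intro h
      rw [if_pos hstart, if_pos h] at hU
      simp at hU
    -- not run end gives an ascent at p
    have hplt : (p : ℕ) + 1 < n := by
      by_contra h
      apply hnend
      intro q hq
      exfalso
      have := q.isLt
      omega
    have hasc : π ⟨(p : ℕ), by omega⟩ < π ⟨(p : ℕ) + 1, hplt⟩ := by
      have hpe : (⟨(p : ℕ), by omega⟩ : Fin n) = p := by ext; rfl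
      rw [hpe]
      rcases lt_trichotomy (π p) (π ⟨(p : ℕ) + 1, hplt⟩) with h | h | h
      · exact h
      · exfalso
        have := congrArg Fin.val (π.injective h)
        simp only [Fin.val_mk] at this
        omega
      · exfalso
        apply hnend
        intro q hq
        have : q = ⟨(p : ℕ) + 1, hplt⟩ := by ext; simp [← hq]
        rw [this]
        exact h
    -- p + 2 < n, else value would be 0
    have hp2 : (p : ℕ) + 2 < n := by
      by_contra h
      have hpn : (p : ℕ) + 2 = n := by omega
      have hstart' : RunStartAt π ⟨(p : ℕ), by omega⟩ := by
        have hpe : (⟨(p : ℕ), by omega⟩ : Fin n) = p := by ext; rfl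
        rw [hpe]; exact hstart
      have := aux_lemD π h₁ hplt hpn hstart' hasc
      have hπpv : (π ⟨(p : ℕ), by omega⟩ : ℕ) = v := by
        have hpe : (⟨(p : ℕ), by omega⟩ : Fin n) = p := by ext; rfl
        rw [hpe, hπp]
      omega
    refine ⟨(p : ℕ), ?_, ?_⟩
    · rw [Finset.mem_filter, Finset.mem_range]
      refine ⟨by omega, ?_, ?_⟩
      · rw [pv, dif_pos (show (p:ℕ) + 2 < n from hp2), pv, dif_pos (show (p:ℕ) < n by omega)]
        exact Fin.lt_def.1 (aux_lemA π h₁ h₂ hp2 hasc)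
      · rw [pv, dif_pos (show (p:ℕ) < n by omega), pv, dif_pos (show (p:ℕ) + 1 < n from hplt)]
        exact Fin.lt_def.1 hasc
    · rw [pv, dif_pos (show (p:ℕ) < n by omega)]
      have hpe : (⟨(p : ℕ), by omega⟩ : Fin n) = p := by ext; rfl
      rw [hpe, hπp]
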